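/- Let char K = 0 and A = K + ∑_{i≥2} K x^i ⊆ K[x]. In D(A) (differential operators on A, realized inside operators on K[x,x^{-1}]), the relations w_{-2i} = w_{-2}^i and w_{-3-2i} = w_{-3} w_{-2}^i hold for all i ≥ 1, where w_{-j} are as defined: w_{-2} = (h+2)(h−1)x^{-2} and w_{-j} = (h−1)(h+1)⋯(h+j−2)(h+j)x^{-j} for j ≥ 3. -/

import Mathlib

/-- The coordinate ring of the cusp: the subalgebra `A = K + ∑_{i ≥ 2} K xⁱ` of `K[x]`,
i.e. (equivalently) the polynomials whose coefficient of `x` vanishes. -/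
def cusp (K : Type*) [Field K] : Subalgebra K (Polynomial K) where
  carrier := {p | p.coeff 1 = 0}
  zero_mem' := by simp
  one_mem' := by simp [Polynomial.coeff_one]
  add_mem' := by
    intro a b ha hb
    simp only [Set.mem_setOf_eq, Polynomial.coeff_add] at *
    rw [ha, hb, add_zero]
  mul_mem' := by
    intro a b ha hb
    simp only [Set.mem_setOf_eq] at *
    rw [Polynomial.coeff_mul, Finset.Nat.sum_antidiagonal_eq_sum_range_succ_mk]
    simp [Finset.sum_range_succ, ha, hb]
  algebraMap_mem' := by
    intro k
    simp [Polynomial.algebraMap_eq, Polynomial.coeff_C]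

/-- `A = K + ∑_{i≥2} K xⁱ` viewed inside the Laurent polynomial ring `K[x,x⁻¹]`. -/
def cuspL (K : Type*) [Field K] : Set (LaurentPolynomial K) :=
  Polynomial.toLaurent '' (cusp K : Set (Polynomial K))

/-- The `K`-linear operator on `K[x,x⁻¹]` sending `xⁿ ↦ f(n)·x^{n+d}`. -/
noncomputable def shiftScale (K : Type*) [Field K] (f : ℤ → K) (d : ℤ) :
    Module.End K (LaurentPolynomial K) :=
  (Finsupp.lsum K fun n : ℤ =>
    LinearMap.toSpanSingleton K (LaurentPolynomial K) (f n • LaurentPolynomial.T (n + d)))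
      ∘ₗ (AddMonoidAlgebra.coeffLinearEquiv K).toLinearMap

/-- The operator `h = x·∂` on `K[x,x⁻¹]`, acting by `xⁿ ↦ n·xⁿ`. -/
noncomputable def hOp (K : Type*) [Field K] : Module.End K (LaurentPolynomial K) :=
  shiftScale K (fun n => (n : K)) 0

/-- Multiplication by `x^d` as a `K`-linear operator on `K[x,x⁻¹]`. -/
noncomputable def xMul (K : Type*) [Field K] (d : ℤ) : Module.End K (LaurentPolynomial K) :=
  LinearMap.mulLeft K (LaurentPolynomial.T d)

open Polynomial in
/-- `P_i(X) = (X-1)·(X+1)(X+2)⋯(X+i-2)·(X+i)`, the polynomial with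
`w_{-i} = P_i(h)·x^{-i}`.  (For `i = 2` this is `(X-1)(X+2)`, i.e. `w_{-2} = (h+2)(h-1)x⁻²`.) -/
noncomputable def Pneg (K : Type*) [Field K] (i : ℕ) : Polynomial K :=
  (X - 1) * (∏ k ∈ Finset.Icc 1 (i - 2), (X + (k : Polynomial K))) * (X + (i : Polynomial K))

open Polynomial in
/-- `Q_i(X) = (X-i-1)·(X-i+1)⋯(X-2)·X`, the polynomial with `xⁱ·w_{-i} = Q_i(h)`. -/
noncomputable def Qneg (K : Type*) [Field K] (i : ℕ) : Polynomial K :=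
  (X - ((i : Polynomial K) + 1)) * (∏ k ∈ Finset.Icc 2 (i - 1), (X - (k : Polynomial K))) * X

/-- The element `w_{-i} = (h-1)(h+1)⋯(h+i-2)(h+i)·x^{-i}` of `D(K[x,x⁻¹])`, as an operator. -/
noncomputable def wneg (K : Type*) [Field K] (i : ℕ) : Module.End K (LaurentPolynomial K) :=
  Polynomial.aeval (hOp K) (Pneg K i) * xMul K (-(i : ℤ))

/-- `w₁ = (h-1)·x`. -/
noncomputable def wone (K : Type*) [Field K] : Module.End K (LaurentPolynomial K) :=
  (hOp K - 1) * xMul K 1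

/-- `w₋₁ = (h+1)(h-1)·x⁻¹`. -/
noncomputable def wnegone (K : Type*) [Field K] : Module.End K (LaurentPolynomial K) :=
  (hOp K + 1) * (hOp K - 1) * xMul K (-1)


section Aux

open Polynomial LaurentPolynomial

variable {K : Type*} [Field K]

lemma shiftScale_T (f : ℤ → K) (d n : ℤ) :
    shiftScale K f d (T n) = f n • T (n + d) := by
  have : (AddMonoidAlgebra.coeffLinearEquiv K) (T (R := K) n) = Finsupp.single n 1 := rfl
  rw [shiftScale, LinearMap.comp_apply, LinearEquiv.coe_coe, this]
  erw [Finsupp.lsum_single]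
  rw [LinearMap.toSpanSingleton_apply, one_smul]

lemma hOp_T (n : ℤ) : hOp K (T n) = (n : K) • T n := by
  rw [hOp, shiftScale_T, add_zero]

lemma hOp_pow_T (k : ℕ) (n : ℤ) : (hOp K ^ k) (T n) = ((n : K)) ^ k • T n := by
  induction k with
  | zero => simp
  | succ k ih =>
    rw [pow_succ, Module.End.mul_apply, hOp_T, map_smul, ih, smul_smul, pow_succ]
    ring_nf

lemma aeval_hOp_T (P : K[X]) (n : ℤ) :
    (Polynomial.aeval (hOp K) P) (T n) = P.eval (n : K) • T n := by
  induction P using Polynomial.induction_on' with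
  | add p q hp hq => simp [hp, hq, add_smul]
  | monomial k a =>
    simp [aeval_monomial, Module.End.mul_apply, hOp_pow_T, Module.algebraMap_end_apply,
      smul_smul, eval_monomial, mul_comm]

lemma xMul_T (d n : ℤ) : xMul K d (T n) = T (n + d) := by
  show T d * T n = T (n + d)
  rw [← LaurentPolynomial.T_add, add_comm]

lemma op_mul (P Q : K[X]) (a b : ℤ) :
    (Polynomial.aeval (hOp K) P * xMul K a) * (Polynomial.aeval (hOp K) Q * xMul K b)
      = Polynomial.aeval (hOp K) (P * Q.comp (X - Polynomial.C (a : K))) * xMul K (a + b) := by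
  refine AddMonoidAlgebra.lhom_ext' fun n => LinearMap.ext_ring ?_
  have hT : (AddMonoidAlgebra.lsingle n : K →ₗ[K] LaurentPolynomial K) 1 = T n := rfl
  simp only [LinearMap.coe_comp, Function.comp_apply, hT]
  show ((Polynomial.aeval (hOp K) P).comp ((xMul K a).comp (((Polynomial.aeval (hOp K) Q)).comp
    (xMul K b)))) (T n) = ((Polynomial.aeval (hOp K) (P * Q.comp (X - Polynomial.C (a : K)))).comp
    (xMul K (a + b))) (T n)
  simp only [LinearMap.comp_apply]
  rw [xMul_T, aeval_hOp_T, map_smul, xMul_T, map_smul, aeval_hOp_T,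
    xMul_T, aeval_hOp_T]
  simp only [smul_smul, eval_mul, eval_comp, eval_sub, eval_X, eval_C]
  rw [show n + b + a = n + (a + b) by ring]
  push_cast
  ring_nf

lemma Pneg_rec (m : ℕ) (hm : 2 ≤ m) :
    Pneg K m * (Pneg K 2).comp (X + Polynomial.C (m : K)) = Pneg K (m + 2) := by
  obtain ⟨m', rfl⟩ := Nat.exists_eq_add_of_le hm
  have h2 : (2 + m' : ℕ) - 2 = m' := by omega
  have h4 : (2 + m' + 2 : ℕ) - 2 = m' + 2 := by omega
  have e1 : ∏ k ∈ Finset.Icc 1 (m' + 2), (X + (k : Polynomial K))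
      = (∏ k ∈ Finset.Icc 1 m', (X + (k : Polynomial K))) * (X + ((m'+1 : ℕ) : Polynomial K))
        * (X + ((m'+2 : ℕ) : Polynomial K)) := by
    rw [Finset.prod_Icc_succ_top (by omega), Finset.prod_Icc_succ_top (by omega)]
  have hIcc : Finset.Icc 1 (2 - 2 : ℕ) = ∅ := by decide
  rw [Pneg, Pneg, Pneg, h2, h4, e1, hIcc]
  simp only [Finset.prod_empty, mul_one, Polynomial.mul_comp, Polynomial.sub_comp,
    Polynomial.add_comp, Polynomial.X_comp, Polynomial.one_comp, Polynomial.natCast_comp,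
    map_add, map_ofNat, map_natCast]
  push_cast
  ring

lemma wneg_mul (m : ℕ) (hm : 2 ≤ m) : wneg K m * wneg K 2 = wneg K (m + 2) := by
  rw [wneg, wneg, wneg, op_mul]
  congr 1
  · rw [← Pneg_rec m hm]
    congr 2
    push_cast [map_neg]
    rw [sub_neg_eq_add]
  · congr 1
    push_cast
    ring

end Aux

/-- In `D(A)` (realized inside the operators on `K[x,x⁻¹]`): for all `i ≥ 1`,
`w_{-2i} = w_{-2}ⁱ` and `w_{-3-2i} = w_{-3}·w_{-2}ⁱ`. -/
theorem stmt15 (K : Type*) [Field K] [CharZero K] (i : ℕ) (hi : 1 ≤ i) :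
    wneg K (2 * i) = (wneg K 2) ^ i ∧
    wneg K (3 + 2 * i) = wneg K 3 * (wneg K 2) ^ i := by
  induction i with
  | zero => omega
  | succ i ih =>
    rcases Nat.eq_or_lt_of_le hi with h | h
    · constructor
      · rw [← h]; simp
      · rw [← h, pow_one]
        exact (wneg_mul 3 (by omega)).symm
    · have hi1 : 1 ≤ i := by omega
      obtain ⟨h1, h2⟩ := ih hi1
      constructor
      · have e : 2 * (i + 1) = 2 * i + 2 := by ring
        rw [e, ← wneg_mul (2 * i) (by omega), h1, pow_succ]
      · have e : 3 + 2 * (i + 1) = (3 + 2 * i) + 2 := by ring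
        rw [e, ← wneg_mul (3 + 2 * i) (by omega), h2, pow_succ, mul_assoc]
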